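/- Let {x_k} be the RK iterates for the system Ãx ≈ b̃ with arbitrary initial point x_0 ∈ ℝⁿ. Then for every x_* ∈ ℝⁿ and every k ≥ 0, the mean of the iterates satisfies ‖𝔼(x_k) − x_0ⁿ − x_*ʳ‖ ≤ (1 − 1/R̃)^k ‖x_0ʳ − x_*ʳ‖ + ‖Ã x_* − b̃‖/σ̃_min. -/

import Mathlib

open Matrix

noncomputable section

namespace RK

/-- The Euclidean inner product on `Fin n → ℝ`. -/
def dot {n : ℕ} (v w : Fin n → ℝ) : ℝ := ∑ i, v i * w i

/-- The squared Euclidean norm on `Fin n → ℝ`. -/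
def normSq {n : ℕ} (v : Fin n → ℝ) : ℝ := ∑ i, v i ^ 2

/-- The Euclidean norm on `Fin n → ℝ`. -/
def euclNorm {n : ℕ} (v : Fin n → ℝ) : ℝ := Real.sqrt (normSq v)

/-- The squared Frobenius norm of a matrix. -/
def frobSq {m n : ℕ} (A : Matrix (Fin m) (Fin n) ℝ) : ℝ := ∑ i, ∑ j, A i j ^ 2

/-- One step of the (randomized) Kaczmarz method for the system `A x ≈ b`, using row `i`:
`x ↦ x - ((aᵢᵀ x - bᵢ) / ‖aᵢ‖²) aᵢ`. -/
def rkStep {m n : ℕ} (A : Matrix (Fin m) (Fin n) ℝ) (b : Fin m → ℝ) (i : Fin m)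
    (x : Fin n → ℝ) : Fin n → ℝ :=
  x - ((dot (A i) x - b i) / normSq (A i)) • A i

/-- `rkExp A b x0 k f` is the expectation `𝔼 f(x_k)` of `f` evaluated at the `k`-th iterate of the
randomized Kaczmarz algorithm applied to `A x ≈ b` started at `x0`, where at each step the row
index `i` is drawn independently at random with probability `‖aᵢ‖² / ‖A‖_F²`. -/
def rkExp {m n : ℕ} (A : Matrix (Fin m) (Fin n) ℝ) (b : Fin m → ℝ) (x0 : Fin n → ℝ) :
    ℕ → ((Fin n → ℝ) → ℝ) → ℝ
  | 0, f => f x0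
  | k + 1, f => rkExp A b x0 k fun x => ∑ i, normSq (A i) / frobSq A * f (rkStep A b i x)

/-- The four Penrose conditions: `B` is the Moore–Penrose pseudoinverse of `A`. -/
def IsMoorePenrose {m n : ℕ} (A : Matrix (Fin m) (Fin n) ℝ)
    (B : Matrix (Fin n) (Fin m) ℝ) : Prop :=
  A * B * A = A ∧ B * A * B = B ∧ (A * B)ᵀ = A * B ∧ (B * A)ᵀ = B * A

/-- The row space `range(Aᵀ)` of a matrix `A`. -/
def rowSpace {m n : ℕ} (A : Matrix (Fin m) (Fin n) ℝ) : Set (Fin n → ℝ) :=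
  {v | ∃ u : Fin m → ℝ, v = Aᵀ.mulVec u}

/-- The null space (kernel) of a matrix `A`. -/
def nullSpace {m n : ℕ} (A : Matrix (Fin m) (Fin n) ℝ) : Set (Fin n → ℝ) :=
  {v | A.mulVec v = 0}

/-- `σ` is the smallest nonzero singular value of `A`: `σ > 0`, `σ²` is an eigenvalue of `AᵀA`,
and `σ²` is less than or equal to every nonzero eigenvalue of `AᵀA`. -/
def IsSmallestNonzeroSingularValue {m n : ℕ} (A : Matrix (Fin m) (Fin n) ℝ) (σ : ℝ) : Prop :=
  0 < σ ∧ (∃ v : Fin n → ℝ, v ≠ 0 ∧ (Aᵀ * A).mulVec v = σ ^ 2 • v) ∧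
    ∀ μ : ℝ, μ ≠ 0 → (∃ v : Fin n → ℝ, v ≠ 0 ∧ (Aᵀ * A).mulVec v = μ • v) → σ ^ 2 ≤ μ

section Aux

variable {m n : ℕ}

lemma dot_comm (v w : Fin n → ℝ) : dot v w = dot w v := by
  simp [dot, mul_comm]

lemma normSq_eq_dot (v : Fin n → ℝ) : normSq v = dot v v := by
  simp [dot, normSq, sq]

lemma normSq_nonneg (v : Fin n → ℝ) : 0 ≤ normSq v :=
  Finset.sum_nonneg fun i _ => sq_nonneg _

lemma normSq_eq_zero {v : Fin n → ℝ} (h : normSq v = 0) : v = 0 := by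
  funext i
  have := (Finset.sum_eq_zero_iff_of_nonneg (fun i _ => sq_nonneg (v i))).mp h i (Finset.mem_univ i)
  simpa [pow_eq_zero_iff] using this

lemma normSq_pos {v : Fin n → ℝ} (h : v ≠ 0) : 0 < normSq v := by
  rcases lt_or_eq_of_le (normSq_nonneg v) with h' | h'
  · exact h'
  · exact absurd (normSq_eq_zero h'.symm) h

lemma euclNorm_nonneg (v : Fin n → ℝ) : 0 ≤ euclNorm v := Real.sqrt_nonneg _

lemma norm_symm (x : Fin n → ℝ) :
    ‖(WithLp.equiv 2 (∀ _ : Fin n, ℝ)).symm x‖ = euclNorm x := by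
  simp [EuclideanSpace.norm_eq, sq_abs, euclNorm, normSq]

lemma inner_symm (x y : Fin n → ℝ) :
    (inner ℝ ((WithLp.equiv 2 (∀ _ : Fin n, ℝ)).symm x)
      ((WithLp.equiv 2 (∀ _ : Fin n, ℝ)).symm y) : ℝ) = dot x y := by
  simp [PiLp.inner_apply, dot, mul_comm]

lemma euclNorm_sub_le (a b : Fin n → ℝ) : euclNorm (a - b) ≤ euclNorm a + euclNorm b := by
  rw [← norm_symm, ← norm_symm a, ← norm_symm b]
  exact norm_sub_le ((WithLp.equiv 2 (∀ _ : Fin n, ℝ)).symm a) _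

lemma dot_smul_left (c : ℝ) (v w : Fin n → ℝ) : dot (c • v) w = c * dot v w := by
  simp [dot, Finset.mul_sum, mul_assoc]

lemma dot_smul_right (c : ℝ) (v w : Fin n → ℝ) : dot v (c • w) = c * dot v w := by
  simp [dot, Finset.mul_sum]; exact Finset.sum_congr rfl fun i _ => by ring

lemma dot_sum_left {ι : Type*} (s : Finset ι) (f : ι → Fin n → ℝ) (w : Fin n → ℝ) :
    dot (∑ j ∈ s, f j) w = ∑ j ∈ s, dot (f j) w := by
  simp only [dot, Finset.sum_apply, Finset.sum_mul]
  exact Finset.sum_comm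

lemma dot_sum_right {ι : Type*} (s : Finset ι) (w : Fin n → ℝ) (f : ι → Fin n → ℝ) :
    dot w (∑ j ∈ s, f j) = ∑ j ∈ s, dot w (f j) := by
  simp only [dot, Finset.sum_apply, Finset.mul_sum]
  exact Finset.sum_comm

lemma dot_cs (v w : Fin n → ℝ) : (dot v w) ^ 2 ≤ normSq v * normSq w :=
  Finset.sum_mul_sq_le_sq_mul_sq _ _ _

lemma dot_mulVec' (A : Matrix (Fin m) (Fin n) ℝ) (v : Fin n → ℝ) (w : Fin m → ℝ) :
    dot (A.mulVec v) w = dot v (Aᵀ.mulVec w) := by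
  simp only [dot, Matrix.mulVec, dotProduct, Matrix.transpose_apply,
    Finset.sum_mul, Finset.mul_sum]
  rw [Finset.sum_comm]
  exact Finset.sum_congr rfl fun i _ => Finset.sum_congr rfl fun l _ => by ring

lemma dot_mulVec_mulVec (A : Matrix (Fin m) (Fin n) ℝ) (v w : Fin n → ℝ) :
    dot (A.mulVec v) (A.mulVec w) = dot v ((Aᵀ * A).mulVec w) := by
  rw [dot_mulVec', Matrix.mulVec_mulVec]

lemma dot_mulVec_self (A : Matrix (Fin m) (Fin n) ℝ) (v : Fin n → ℝ) :
    dot v ((Aᵀ * A).mulVec v) = normSq (A.mulVec v) := by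
  rw [← dot_mulVec_mulVec, normSq_eq_dot]

lemma frobSq_eq_sum_normSq (A : Matrix (Fin m) (Fin n) ℝ) :
    frobSq A = ∑ i, normSq (A i) := rfl

end Aux
section Exp

variable {m n : ℕ} (A : Matrix (Fin m) (Fin n) ℝ) (b : Fin m → ℝ) (x0 : Fin n → ℝ)

lemma rkExp_congr {k : ℕ} {f g : (Fin n → ℝ) → ℝ} (h : ∀ x, f x = g x) :
    rkExp A b x0 k f = rkExp A b x0 k g :=
  congrArg _ (funext h)

lemma rkExp_add (k : ℕ) (f g : (Fin n → ℝ) → ℝ) :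
    rkExp A b x0 k (fun x => f x + g x) = rkExp A b x0 k f + rkExp A b x0 k g := by
  induction k generalizing f g with
  | zero => rfl
  | succ k ih =>
    simp only [rkExp]
    rw [rkExp_congr A b x0 (g := fun x =>
        (∑ i, normSq (A i) / frobSq A * f (rkStep A b i x)) +
        (∑ i, normSq (A i) / frobSq A * g (rkStep A b i x)))
      (fun x => by
        rw [← Finset.sum_add_distrib]
        exact Finset.sum_congr rfl fun i _ => mul_add ..)]
    exact ih _ _

lemma rkExp_smul (k : ℕ) (c : ℝ) (f : (Fin n → ℝ) → ℝ) :
    rkExp A b x0 k (fun x => c * f x) = c * rkExp A b x0 k f := by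
  induction k generalizing f with
  | zero => rfl
  | succ k ih =>
    simp only [rkExp]
    rw [rkExp_congr A b x0 (g := fun x =>
        c * ∑ i, normSq (A i) / frobSq A * f (rkStep A b i x))
      (fun x => by
        rw [Finset.mul_sum]
        exact Finset.sum_congr rfl fun i _ => by ring)]
    exact ih _

lemma rkExp_const (hF : frobSq A ≠ 0) (k : ℕ) (c : ℝ) :
    rkExp A b x0 k (fun _ => c) = c := by
  induction k with
  | zero => rfl
  | succ k ih =>
    simp only [rkExp]
    rw [rkExp_congr A b x0 (g := fun _ => c) (fun x => by
      rw [← Finset.sum_mul, ← Finset.sum_div, ← frobSq_eq_sum_normSq, div_self hF, one_mul])]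
    exact ih

lemma rkExp_sum (hF : frobSq A ≠ 0) {ι : Type*} (k : ℕ) (s : Finset ι)
    (g : ι → (Fin n → ℝ) → ℝ) :
    rkExp A b x0 k (fun x => ∑ l ∈ s, g l x) = ∑ l ∈ s, rkExp A b x0 k (g l) := by
  classical
  induction s using Finset.induction with
  | empty => simpa using rkExp_const A b x0 hF k 0
  | insert a s hnotmem ih =>
    rw [Finset.sum_insert hnotmem,
      rkExp_congr A b x0 (fun x => Finset.sum_insert hnotmem), rkExp_add, ih]

end Exp
section Rec

variable {m n : ℕ} (A : Matrix (Fin m) (Fin n) ℝ) (b : Fin m → ℝ) (x0 : Fin n → ℝ)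

lemma mulVec_transpose_mul_self_apply (x : Fin n → ℝ) (j : Fin n) :
    (Aᵀ * A).mulVec x j = ∑ i, dot (A i) x * A i j := by
  simp only [Matrix.mulVec, dotProduct, Matrix.mul_apply, Matrix.transpose_apply,
    dot, Finset.sum_mul, Finset.mul_sum]
  rw [Finset.sum_comm]
  exact Finset.sum_congr rfl fun i _ => Finset.sum_congr rfl fun l _ => by ring

lemma mulVec_transpose_apply' (w : Fin m → ℝ) (j : Fin n) :
    Aᵀ.mulVec w j = ∑ i, w i * A i j := by
  simp only [Matrix.mulVec, dotProduct, Matrix.transpose_apply]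
  exact Finset.sum_congr rfl fun i _ => by ring

lemma step_avg (hrows : ∀ i, A i ≠ 0) (hF : frobSq A ≠ 0) (x : Fin n → ℝ) (j : Fin n) :
    ∑ i, normSq (A i) / frobSq A * rkStep A b i x j
      = x j - (Aᵀ * A).mulVec x j / frobSq A + Aᵀ.mulVec b j / frobSq A := by
  have h1 : ∀ i : Fin m, normSq (A i) / frobSq A * rkStep A b i x j
      = normSq (A i) / frobSq A * x j - dot (A i) x * A i j / frobSq A
        + b i * A i j / frobSq A := by
    intro i
    have hN : normSq (A i) ≠ 0 := ne_of_gt (normSq_pos (hrows i))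
    simp only [rkStep, Pi.sub_apply, Pi.smul_apply, smul_eq_mul]
    field_simp
    ring
  rw [Finset.sum_congr rfl fun i _ => h1 i]
  rw [Finset.sum_add_distrib, Finset.sum_sub_distrib, ← Finset.sum_div, ← Finset.sum_div,
    ← Finset.sum_mul, ← Finset.sum_div, ← frobSq_eq_sum_normSq, div_self hF, one_mul,
    mulVec_transpose_mul_self_apply, mulVec_transpose_apply']

lemma rkExp_coord_succ (hrows : ∀ i, A i ≠ 0) (hF : frobSq A ≠ 0) (k : ℕ) (j : Fin n) :
    rkExp A b x0 (k + 1) (fun x => x j)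
      = rkExp A b x0 k (fun x => x j)
        - (Aᵀ * A).mulVec (fun l => rkExp A b x0 k fun x => x l) j / frobSq A
        + Aᵀ.mulVec b j / frobSq A := by
  have h0 : rkExp A b x0 (k + 1) (fun x => x j)
      = rkExp A b x0 k (fun x => ∑ i, normSq (A i) / frobSq A * rkStep A b i x j) := rfl
  have hneg : ∀ c : Fin n → ℝ, ∑ l, (-((Aᵀ * A) j l / frobSq A)) * c l
      = -((∑ l, (Aᵀ * A) j l * c l) / frobSq A) := by
    intro c
    rw [Finset.sum_div, ← Finset.sum_neg_distrib]
    exact Finset.sum_congr rfl fun l _ => by ring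
  rw [h0, rkExp_congr A b x0 (fun x => step_avg A b hrows hF x j)]
  have h2 : ∀ x : Fin n → ℝ, x j - (Aᵀ * A).mulVec x j / frobSq A + Aᵀ.mulVec b j / frobSq A
      = (x j + ∑ l, (-((Aᵀ * A) j l / frobSq A)) * x l) + Aᵀ.mulVec b j / frobSq A := by
    intro x
    have hmv : (Aᵀ * A).mulVec x j = ∑ l, (Aᵀ * A) j l * x l := by
      simp [Matrix.mulVec, dotProduct]
    rw [hmv, hneg x]
    ring
  rw [rkExp_congr A b x0 h2, rkExp_add, rkExp_add, rkExp_sum A b x0 hF,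
    rkExp_const A b x0 hF]
  have h3 : ∀ l, rkExp A b x0 k (fun x => (-((Aᵀ * A) j l / frobSq A)) * x l)
      = (-((Aᵀ * A) j l / frobSq A)) * rkExp A b x0 k (fun x => x l) := fun l =>
    rkExp_smul A b x0 k _ _
  rw [Finset.sum_congr rfl fun l _ => h3 l]
  have h4 : (Aᵀ * A).mulVec (fun l => rkExp A b x0 k fun x => x l) j
      = ∑ l, (Aᵀ * A) j l * rkExp A b x0 k (fun x => x l) := by
    simp [Matrix.mulVec, dotProduct]
  rw [h4, hneg fun l => rkExp A b x0 k (fun x => x l)]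
  ring

end Rec
section Eigen

variable {m n : ℕ}

lemma basis_dot (b : OrthonormalBasis (Fin n) ℝ (EuclideanSpace ℝ (Fin n))) (i j : Fin n) :
    dot (⇑(b i)) (⇑(b j)) = if i = j then 1 else 0 := by
  have h := orthonormal_iff_ite.mp b.orthonormal i j
  rw [← h]
  simp [PiLp.inner_apply, dot, mul_comm]

lemma expand_basis (b : OrthonormalBasis (Fin n) ℝ (EuclideanSpace ℝ (Fin n)))
    (v : Fin n → ℝ) : v = ∑ j, dot (⇑(b j)) v • (⇑(b j) : Fin n → ℝ) := by
  have h2 : ∀ j, b.repr ((WithLp.equiv 2 (∀ _ : Fin n, ℝ)).symm v) j = dot (⇑(b j)) v := by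
    intro j
    rw [b.repr_apply_apply]
    simp [PiLp.inner_apply, dot, mul_comm]
  have h3 := congrArg (fun z : EuclideanSpace ℝ (Fin n) => (⇑z : Fin n → ℝ))
    (b.sum_repr ((WithLp.equiv 2 (∀ _ : Fin n, ℝ)).symm v))
  simp only at h3
  change _ = v at h3
  have h4 : (∑ j, dot (⇑(b j)) v • (⇑(b j) : Fin n → ℝ))
      = ((WithLp.equiv 2 (∀ _ : Fin n, ℝ))
          (∑ j, b.repr ((WithLp.equiv 2 (∀ _ : Fin n, ℝ)).symm v) j • b j) : Fin n → ℝ) := by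
    rw [show ((WithLp.equiv 2 (∀ _ : Fin n, ℝ))
          (∑ j, b.repr ((WithLp.equiv 2 (∀ _ : Fin n, ℝ)).symm v) j • b j) : Fin n → ℝ)
        = ∑ j, b.repr ((WithLp.equiv 2 (∀ _ : Fin n, ℝ)).symm v) j • (⇑(b j) : Fin n → ℝ)
        from by simp [WithLp.ofLp_sum]]
    exact Finset.sum_congr rfl fun j _ => by rw [h2]
  rw [h4]; exact h3.symm

lemma normSq_sum_smul (b : OrthonormalBasis (Fin n) ℝ (EuclideanSpace ℝ (Fin n)))
    (c : Fin n → ℝ) : normSq (∑ j, c j • (⇑(b j) : Fin n → ℝ)) = ∑ j, c j ^ 2 := by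
  rw [normSq_eq_dot, dot_sum_left]
  have h : ∀ i, dot (c i • (⇑(b i) : Fin n → ℝ)) (∑ j, c j • (⇑(b j) : Fin n → ℝ))
      = c i ^ 2 := by
    intro i
    rw [dot_smul_left, dot_sum_right]
    rw [Finset.sum_congr rfl fun j _ => dot_smul_right (c j) _ _]
    rw [Finset.sum_congr rfl fun j _ => by rw [basis_dot b i j]]
    simp [Finset.sum_ite_eq, sq]
  rw [Finset.sum_congr rfl fun i _ => h i]

lemma normSq_mulVec_le (A : Matrix (Fin m) (Fin n) ℝ) (v : Fin n → ℝ) :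
    normSq (A.mulVec v) ≤ frobSq A * normSq v := by
  have h : ∀ i, A.mulVec v i = dot (A i) v := fun i => rfl
  calc normSq (A.mulVec v) = ∑ i, (dot (A i) v) ^ 2 := by
        unfold normSq; exact Finset.sum_congr rfl fun i _ => by rw [h]
    _ ≤ ∑ i, normSq (A i) * normSq v := Finset.sum_le_sum fun i _ => dot_cs _ _
    _ = frobSq A * normSq v := by rw [← Finset.sum_mul, ← frobSq_eq_sum_normSq]

lemma geom_sum_le_inv {x : ℝ} (h0 : 0 ≤ x) (h1 : x < 1) (k : ℕ) :
    ∑ t ∈ Finset.range k, x ^ t ≤ (1 - x)⁻¹ := by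
  have hx : 0 < 1 - x := by linarith
  have h := geom_sum_mul x k
  have hp : 0 ≤ x ^ k := pow_nonneg h0 k
  have hle : (∑ t ∈ Finset.range k, x ^ t) * (1 - x) ≤ 1 := by nlinarith
  calc ∑ t ∈ Finset.range k, x ^ t
      = (∑ t ∈ Finset.range k, x ^ t) * (1 - x) * (1 - x)⁻¹ := by field_simp
    _ ≤ 1 * (1 - x)⁻¹ := mul_le_mul_of_nonneg_right hle (by positivity)
    _ = (1 - x)⁻¹ := one_mul _

end Eigen
/-- **Corollary 3.4 (error of the mean).** For the RK iterates of `Ãx ≈ b̃` with arbitrary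
initial point `x₀` and any `x⋆`:
`‖𝔼(x_k) − x₀ⁿ − x⋆ʳ‖ ≤ (1 − 1/R̃)^k ‖x₀ʳ − x⋆ʳ‖ + ‖Ã x⋆ − b̃‖ / σ̃_min`. -/
theorem rk_mean_iterate_bound {m n : ℕ}
    (At : Matrix (Fin m) (Fin n) ℝ) (bt : Fin m → ℝ)
    (hAt : At ≠ 0) (hrows : ∀ i, At i ≠ 0)
    (σmin : ℝ) (hσ : IsSmallestNonzeroSingularValue At σmin)
    (x0 xstar x0r x0n xsr xsn : Fin n → ℝ)
    (hx0r : x0r ∈ rowSpace At) (hx0n : x0n ∈ nullSpace At) (hx0 : x0 = x0r + x0n)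
    (hxsr : xsr ∈ rowSpace At) (hxsn : xsn ∈ nullSpace At) (hxs : xstar = xsr + xsn)
    (k : ℕ) :
    euclNorm ((fun j => rkExp At bt x0 k (fun x => x j)) - x0n - xsr) ≤
      (1 - σmin ^ 2 / frobSq At) ^ k * euclNorm (x0r - xsr)
        + euclNorm (At.mulVec xstar - bt) / σmin := by
  classical
  obtain ⟨hσpos, hσex, hσmin⟩ := hσ
  -- positivity of the Frobenius norm
  have hF : 0 < frobSq At := by
    have hex : ∃ i, At i ≠ 0 := by
      by_contra hcon
      push_neg at hcon
      exact hAt (by ext i j; rw [hcon i]; rfl)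
    obtain ⟨i0, h0⟩ := hex
    rw [frobSq_eq_sum_normSq]
    exact Finset.sum_pos' (fun i _ => normSq_nonneg _)
      ⟨i0, Finset.mem_univ _, normSq_pos h0⟩
  have hFne : frobSq At ≠ 0 := ne_of_gt hF
  -- eigen decomposition of S = Aᵀ A
  have hS : (Atᵀ * At).IsHermitian := by
    have h := Matrix.isHermitian_conjTranspose_mul_self At
    simpa using h
  set u : Fin n → (Fin n → ℝ) := fun j => ⇑(hS.eigenvectorBasis j) with hu
  set μ : Fin n → ℝ := hS.eigenvalues with hμdef
  have hSu : ∀ j, (Atᵀ * At).mulVec (u j) = μ j • u j := fun j =>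
    hS.mulVec_eigenvectorBasis j
  have hortho : ∀ i j, dot (u i) (u j) = if i = j then 1 else 0 := fun i j =>
    basis_dot hS.eigenvectorBasis i j
  have hexpand : ∀ v : Fin n → ℝ, v = ∑ j, dot (u j) v • u j := fun v =>
    expand_basis hS.eigenvectorBasis v
  have hpars : ∀ c : Fin n → ℝ, normSq (∑ j, c j • u j) = ∑ j, c j ^ 2 := fun c =>
    normSq_sum_smul hS.eigenvectorBasis c
  have hnormu : ∀ j, normSq (u j) = 1 := fun j => by
    rw [normSq_eq_dot, hortho]; simp
  have hune : ∀ j, u j ≠ 0 := fun j h => by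
    have h1 := hnormu j
    rw [h] at h1
    simp [normSq] at h1
  have hμval : ∀ j, μ j = normSq (At.mulVec (u j)) := by
    intro j
    rw [← dot_mulVec_self, hSu j, dot_smul_right, ← normSq_eq_dot, hnormu, mul_one]
  have hμ0 : ∀ j, 0 ≤ μ j := fun j => (hμval j) ▸ normSq_nonneg _
  have hμF : ∀ j, μ j ≤ frobSq At := by
    intro j
    have h := normSq_mulVec_le At (u j)
    rw [hnormu, mul_one] at h
    rw [hμval j]
    exact h
  have hσμ : ∀ j, μ j ≠ 0 → σmin ^ 2 ≤ μ j := fun j hj =>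
    hσmin (μ j) hj ⟨u j, hune j, hSu j⟩
  have hσF : σmin ^ 2 ≤ frobSq At := by
    obtain ⟨v, hv0, hv⟩ := hσex
    have h1 : dot v ((Atᵀ * At).mulVec v) = σmin ^ 2 * normSq v := by
      rw [hv, dot_smul_right, ← normSq_eq_dot]
    have h2 := dot_mulVec_self At v
    have h3 := normSq_mulVec_le At v
    have h4 := normSq_pos hv0
    nlinarith
  have hrow0 : ∀ v ∈ rowSpace At, ∀ j, μ j = 0 → dot (u j) v = 0 := by
    rintro v ⟨z, rfl⟩ j hj
    have hA0 : At.mulVec (u j) = 0 := normSq_eq_zero (by rw [← hμval, hj])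
    rw [← dot_mulVec' At (u j) z, hA0]
    simp [dot]
  -- notation
  set r : Fin m → ℝ := At.mulVec xstar - bt with hrdef
  set w : Fin n → ℝ := x0r - xsr with hwdef
  have hwmem : w ∈ rowSpace At := by
    obtain ⟨z1, hz1⟩ := hx0r
    obtain ⟨z2, hz2⟩ := hxsr
    exact ⟨z1 - z2, by rw [hwdef, hz1, hz2, Matrix.mulVec_sub]⟩
  set g : Fin n → ℝ := Atᵀ.mulVec r with hgdef
  have hgmem : g ∈ rowSpace At := ⟨r, rfl⟩
  set q : Fin n → ℝ := fun j => 1 - μ j / frobSq At with hq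
  set c1 : Fin n → ℝ := fun j => dot (u j) w with hc1
  set c2 : Fin n → ℝ := fun j => dot (u j) g with hc2
  set e : ℕ → (Fin n → ℝ) := fun k => fun j => rkExp At bt x0 k (fun x => x j) with he
  set β : ℕ → Fin n → ℝ := fun k j =>
    q j ^ k * c1 j - (∑ t ∈ Finset.range k, q j ^ t) * c2 j / frobSq At with hβ
  have hc1z : ∀ j, μ j = 0 → c1 j = 0 := fun j hj => hrow0 w hwmem j hj
  have hc2z : ∀ j, μ j = 0 → c2 j = 0 := fun j hj => hrow0 g hgmem j hj
  have hx0n' : At.mulVec x0n = 0 := hx0n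
  have hxsn' : At.mulVec xsn = 0 := hxsn
  have hAxsr : At.mulVec xsr = At.mulVec xstar := by
    rw [hxs, Matrix.mulVec_add, hxsn', add_zero]
  have hwexp : w = ∑ j, c1 j • u j := hexpand w
  have hgexp : g = ∑ j, c2 j • u j := hexpand g
  -- closed form for the mean error
  have key : ∀ k, e k - x0n - xsr = ∑ j, β k j • u j := by
    intro k
    induction k with
    | zero =>
      have h0 : e 0 = x0 := rfl
      have hβ0 : ∀ j, β 0 j = c1 j := by intro j; simp [hβ]
      rw [h0, hx0]
      rw [show x0r + x0n - x0n - xsr = w from by rw [hwdef]; abel]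
      rw [Finset.sum_congr rfl fun j _ => by rw [hβ0 j]]
      exact hwexp
    | succ k ih =>
      have hsucc : e (k + 1) = fun j => e k j - (Atᵀ * At).mulVec (e k) j / frobSq At
          + Atᵀ.mulVec bt j / frobSq At :=
        funext fun j => rkExp_coord_succ At bt x0 hrows hFne k j
      have hek : e k = (∑ j, β k j • u j) + x0n + xsr := by
        rw [← ih]
        funext l
        simp only [Pi.sub_apply, Pi.add_apply]
        ring
      have hmv_sum : (Atᵀ * At).mulVec (∑ j, β k j • u j) = ∑ j, (μ j * β k j) • u j := by
        rw [← Matrix.mulVecLin_apply, map_sum]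
        refine Finset.sum_congr rfl fun j _ => ?_
        rw [_root_.map_smul, Matrix.mulVecLin_apply, hSu j, smul_smul, mul_comm]
      have hSx0n : (Atᵀ * At).mulVec x0n = 0 := by
        rw [← Matrix.mulVec_mulVec, hx0n', Matrix.mulVec_zero]
      have hSxsr : (Atᵀ * At).mulVec xsr = g + Atᵀ.mulVec bt := by
        rw [← Matrix.mulVec_mulVec, hAxsr,
          show At.mulVec xstar = r + bt from by rw [hrdef]; abel,
          Matrix.mulVec_add, hgdef]
      have step1 : e (k + 1) - x0n - xsr
          = (e k - x0n - xsr) - (frobSq At)⁻¹ • (Atᵀ * At).mulVec (e k)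
            + (frobSq At)⁻¹ • Atᵀ.mulVec bt := by
        rw [hsucc]
        funext l
        simp only [Pi.sub_apply, Pi.add_apply, Pi.smul_apply, smul_eq_mul]
        field_simp
        ring
      have hcoef : ∀ j, β (k + 1) j • u j
          = β k j • u j - ((frobSq At)⁻¹ * (μ j * β k j)) • u j
            - ((frobSq At)⁻¹ * c2 j) • u j := by
        intro j
        rw [← sub_smul, ← sub_smul]
        congr 1
        simp only [hβ, hq]
        rw [geom_sum_succ]
        ring
      have hs1 : ∑ j, ((frobSq At)⁻¹ * (μ j * β k j)) • u j
          = (frobSq At)⁻¹ • ∑ j, (μ j * β k j) • u j := by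
        rw [Finset.smul_sum]
        exact Finset.sum_congr rfl fun j _ => by rw [smul_smul]
      have hs2 : ∑ j, ((frobSq At)⁻¹ * c2 j) • u j
          = (frobSq At)⁻¹ • ∑ j, c2 j • u j := by
        rw [Finset.smul_sum]
        exact Finset.sum_congr rfl fun j _ => by rw [smul_smul]
      rw [step1, ih, hek, Matrix.mulVec_add, Matrix.mulVec_add, hmv_sum, hSx0n, hSxsr,
        hgexp, Finset.sum_congr rfl fun j _ => hcoef j, Finset.sum_sub_distrib,
        Finset.sum_sub_distrib, hs1, hs2]
      simp only [smul_add, add_zero]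
      abel
  rw [show ((fun j => rkExp At bt x0 k fun x => x j)) - x0n - xsr
      = ∑ j, β k j • u j from key k]
  set Q : ℝ := 1 - σmin ^ 2 / frobSq At with hQ
  have hQ0 : 0 ≤ Q := by rw [hQ, sub_nonneg]; exact (div_le_one hF).mpr hσF
  have hsplit : (∑ j, β k j • u j)
      = (∑ j, (q j ^ k * c1 j) • u j)
        - (∑ j, ((∑ t ∈ Finset.range k, q j ^ t) * c2 j / frobSq At) • u j) := by
    rw [← Finset.sum_sub_distrib]
    exact Finset.sum_congr rfl fun j _ => by rw [← sub_smul]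
  rw [hsplit]
  refine le_trans (euclNorm_sub_le _ _) (add_le_add ?_ ?_)
  · -- contraction part
    have hterm : ∀ j ∈ Finset.univ, (q j ^ k * c1 j) ^ 2 ≤ (Q ^ k) ^ 2 * c1 j ^ 2 := by
      intro j _
      by_cases hc : c1 j = 0
      · simp [hc]
      · have hμne : μ j ≠ 0 := fun h => hc (hc1z j h)
        have h0 : 0 ≤ q j := by
          rw [hq]; simp only; rw [sub_nonneg]; exact (div_le_one hF).mpr (hμF j)
        have h1 : q j ≤ Q := by
          rw [hq, hQ]; simp only
          exact sub_le_sub_left ((div_le_div_iff_of_pos_right hF).mpr (hσμ j hμne)) 1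
        have h2 : q j ^ k ≤ Q ^ k := pow_le_pow_left₀ h0 h1 k
        have h3 : 0 ≤ q j ^ k := pow_nonneg h0 k
        nlinarith [sq_nonneg (c1 j), mul_le_mul h2 h2 h3 (h3.trans h2)]
    have hc1sum : ∑ j, c1 j ^ 2 = normSq w := by
      conv_rhs => rw [hwexp]
      rw [hpars]
    calc euclNorm (∑ j, (q j ^ k * c1 j) • u j)
        = Real.sqrt (∑ j, (q j ^ k * c1 j) ^ 2) := by unfold euclNorm; rw [hpars]
      _ ≤ Real.sqrt ((Q ^ k) ^ 2 * normSq w) := by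
          apply Real.sqrt_le_sqrt
          rw [← hc1sum, Finset.mul_sum]
          exact Finset.sum_le_sum hterm
      _ = Q ^ k * euclNorm w := by
          rw [Real.sqrt_mul (sq_nonneg _), Real.sqrt_sq (pow_nonneg hQ0 k)]
          rfl
  · -- Bessel / residual part
    set f : {j : Fin n // μ j ≠ 0} → EuclideanSpace ℝ (Fin m) := fun j =>
      (WithLp.equiv 2 (∀ _ : Fin m, ℝ)).symm ((Real.sqrt (μ j))⁻¹ • At.mulVec (u j)) with hf
    have hfon : Orthonormal ℝ f := by
      rw [orthonormal_iff_ite]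
      intro i j
      rw [hf]
      simp only
      rw [inner_symm, dot_smul_left, dot_smul_right, dot_mulVec_mulVec, hSu j,
        dot_smul_right, hortho]
      by_cases hij : i = j
      · subst hij
        rw [if_pos rfl, if_pos rfl]
        have hμpos : 0 < μ i := lt_of_le_of_ne (hμ0 i) (Ne.symm i.2)
        have hsq : Real.sqrt (μ i) * Real.sqrt (μ i) = μ i := Real.mul_self_sqrt (hμ0 i)
        have hsne : Real.sqrt (μ i) ≠ 0 := by positivity
        field_simp
        exact (Real.sq_sqrt (hμ0 i)).symm
      · rw [if_neg (fun h : (i : Fin n) = j => hij (Subtype.ext h)), if_neg hij]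
        ring
    have hB := Orthonormal.sum_inner_products_le (𝕜 := ℝ)
      (x := (WithLp.equiv 2 (∀ _ : Fin m, ℝ)).symm r) (s := Finset.univ) hfon
    have hBval : ∀ j : {j : Fin n // μ j ≠ 0},
        ‖(inner ℝ (f j) ((WithLp.equiv 2 (∀ _ : Fin m, ℝ)).symm r) : ℝ)‖ ^ 2
          = c2 (↑j) ^ 2 / μ ↑j := by
      intro j
      rw [hf]
      simp only
      rw [inner_symm, dot_smul_left, dot_mulVec' At (u ↑j) r, ← hgdef]
      rw [Real.norm_eq_abs, sq_abs, mul_pow, inv_pow, Real.sq_sqrt (hμ0 ↑j)]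
      rw [hc2]
      simp only
      rw [inv_mul_eq_div]
    have hnormr : ‖(WithLp.equiv 2 (∀ _ : Fin m, ℝ)).symm r‖ ^ 2 = normSq r := by
      rw [norm_symm]
      unfold euclNorm
      exact Real.sq_sqrt (normSq_nonneg r)
    rw [Finset.sum_congr rfl (fun j _ => hBval j), hnormr] at hB
    have hsubty : ∑ j : {j : Fin n // μ j ≠ 0}, c2 (↑j) ^ 2 / μ ↑j
        = ∑ j ∈ Finset.univ.filter (fun j => μ j ≠ 0), c2 j ^ 2 / μ j :=
      (Finset.sum_subtype (p := fun j => μ j ≠ 0)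
        (Finset.univ.filter fun j => μ j ≠ 0) (fun x => by simp)
        (fun j => c2 j ^ 2 / μ j)).symm
    have hfilter : ∑ j ∈ Finset.univ.filter (fun j => μ j ≠ 0), c2 j ^ 2 / μ j
        = ∑ j, if μ j = 0 then 0 else c2 j ^ 2 / μ j := by
      rw [Finset.sum_filter]
      exact Finset.sum_congr rfl fun j _ => by by_cases h : μ j = 0 <;> simp [h]
    have hbessel : ∑ j, (if μ j = 0 then 0 else c2 j ^ 2 / μ j) ≤ normSq r := by
      rw [← hfilter, ← hsubty]
      exact hB
    have hterm2 : ∀ j ∈ Finset.univ,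
        ((∑ t ∈ Finset.range k, q j ^ t) * c2 j / frobSq At) ^ 2
          ≤ (if μ j = 0 then 0 else c2 j ^ 2 / μ j) / σmin ^ 2 := by
      intro j _
      by_cases hj : μ j = 0
      · rw [if_pos hj, hc2z j hj]
        simp
      · rw [if_neg hj]
        have hμpos : 0 < μ j := lt_of_le_of_ne (hμ0 j) (Ne.symm hj)
        have hq0 : 0 ≤ q j := by
          rw [hq]; simp only; rw [sub_nonneg]; exact (div_le_one hF).mpr (hμF j)
        have hq1 : q j < 1 := by
          rw [hq]; simp only
          have : 0 < μ j / frobSq At := div_pos hμpos hF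
          linarith
        have hgeo := geom_sum_le_inv hq0 hq1 k
        have hinv : (1 - q j)⁻¹ = frobSq At / μ j := by
          rw [hq]; simp only
          rw [show (1 : ℝ) - (1 - μ j / frobSq At) = μ j / frobSq At from by ring, inv_div]
        rw [hinv] at hgeo
        have hs0 : 0 ≤ ∑ t ∈ Finset.range k, q j ^ t :=
          Finset.sum_nonneg fun t _ => pow_nonneg hq0 t
        have hXμ : (∑ t ∈ Finset.range k, q j ^ t) * μ j ≤ frobSq At :=
          (le_div_iff₀ hμpos).mp hgeo
        have hσ2 : σmin ^ 2 ≤ μ j := hσμ j hj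
        rw [div_pow, div_div, div_le_div_iff₀ (by positivity) (by positivity)]
        obtain ⟨X, hXe⟩ : ∃ X, (∑ t ∈ Finset.range k, q j ^ t) = X := ⟨_, rfl⟩
        obtain ⟨C, hCe⟩ : ∃ C, c2 j = C := ⟨_, rfl⟩
        obtain ⟨M, hMe⟩ : ∃ M, μ j = M := ⟨_, rfl⟩
        obtain ⟨Fb, hFe⟩ : ∃ Fb, frobSq At = Fb := ⟨_, rfl⟩
        rw [hXe, hMe, hFe] at hXμ
        rw [hXe] at hs0
        rw [hMe] at hμpos hσ2
        rw [hFe] at hF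
        rw [hXe, hCe, hMe, hFe]
        have h8 : (X * M) ^ 2 ≤ Fb ^ 2 :=
          pow_le_pow_left₀ (mul_nonneg hs0 hμpos.le) hXμ 2
        have h9 : (X * C) ^ 2 * (M * σmin ^ 2) ≤ (X * C) ^ 2 * (M * M) :=
          mul_le_mul_of_nonneg_left
            (mul_le_mul_of_nonneg_left hσ2 hμpos.le) (sq_nonneg (X * C))
        have h10 : (X * C) ^ 2 * (M * M) = C ^ 2 * (X * M) ^ 2 := by ring
        have h11 : C ^ 2 * (X * M) ^ 2 ≤ C ^ 2 * Fb ^ 2 :=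
          mul_le_mul_of_nonneg_left h8 (sq_nonneg C)
        exact le_trans h9 (le_trans (le_of_eq h10) h11)
    have hsum2 : ∑ j, ((∑ t ∈ Finset.range k, q j ^ t) * c2 j / frobSq At) ^ 2
        ≤ normSq r / σmin ^ 2 := by
      calc ∑ j, ((∑ t ∈ Finset.range k, q j ^ t) * c2 j / frobSq At) ^ 2
          ≤ ∑ j, (if μ j = 0 then 0 else c2 j ^ 2 / μ j) / σmin ^ 2 :=
            Finset.sum_le_sum hterm2
        _ = (∑ j, if μ j = 0 then 0 else c2 j ^ 2 / μ j) / σmin ^ 2 := by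
            rw [← Finset.sum_div]
        _ ≤ normSq r / σmin ^ 2 := by gcongr
    calc euclNorm (∑ j, ((∑ t ∈ Finset.range k, q j ^ t) * c2 j / frobSq At) • u j)
        = Real.sqrt (∑ j, ((∑ t ∈ Finset.range k, q j ^ t) * c2 j / frobSq At) ^ 2) := by
          unfold euclNorm; rw [hpars]
      _ ≤ Real.sqrt (normSq r / σmin ^ 2) := Real.sqrt_le_sqrt hsum2
      _ = euclNorm r / σmin := by
          rw [Real.sqrt_div (normSq_nonneg r), Real.sqrt_sq hσpos.le]
          rfl

end RK
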